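/- Let n ≥ 2 be a natural number, and let C > 0 and α > 0 be real numbers such that for all nonnegative real numbers x_1, ..., x_n one has (x_1 + ... + x_n)/n - (x_1 x_2 ... x_n)^(1/n) ≥ C · ∑_{1 ≤ i < j ≤ n} | x_i^{1/α} - x_j^{1/α} |^α. Then C ≤ 1/(n(n-1)) and α ≥ 2. -/

import Mathlib

open Finset Real

lemma aux_pow (n : ℕ) (u : ℝ) (hu : 1 ≤ u) :
    u ^ n - 1 - n * (u - 1) ≤ n ^ 2 * u ^ n * (u - 1) ^ 2 := by
  induction n with
  | zero => simp
  | succ n ih =>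
    have h1 : (0:ℝ) ≤ u ^ n := by positivity
    have h2 : (1:ℝ) ≤ u ^ n := one_le_pow₀ hu
    have h3 := mul_le_mul_of_nonneg_left ih (le_trans zero_le_one hu)
    have hn : (0:ℝ) ≤ (n:ℝ) := Nat.cast_nonneg n
    have h5 : (1:ℝ) ≤ u ^ n * u := by nlinarith
    have h4 : (n:ℝ) * (u - 1) ^ 2 ≤ (2 * n + 1) * (u ^ n * u) * (u - 1) ^ 2 := by
      nlinarith [mul_le_mul_of_nonneg_left h5 (mul_nonneg (by linarith : (0:ℝ) ≤ 2*n+1) (sq_nonneg (u-1)))]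
    push_cast
    rw [pow_succ]
    nlinarith [sq_nonneg (u-1)]

lemma aux_bern (β t : ℝ) (hβ : 0 < β) (ht : 0 ≤ t) (ht1 : t ≤ 1) :
    (1 + t) ^ β ≤ 1 + β * 2 ^ β * t := by
  have h2 : (1:ℝ) ≤ (2:ℝ) ^ β := Real.one_le_rpow (by norm_num) hβ.le
  rcases le_or_gt β 1 with hb | hb
  · calc (1 + t) ^ β ≤ 1 + β * t :=
          rpow_one_add_le_one_add_mul_self (by linarith) hβ.le hb
      _ ≤ 1 + β * 2 ^ β * t := by
          nlinarith [mul_nonneg (mul_nonneg hβ.le ht) (by linarith : (0:ℝ) ≤ 2 ^ β - 1)]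
  · have hc := (convexOn_rpow hb.le).2 (Set.mem_Ici.2 (zero_le_one)) (Set.mem_Ici.2 (by norm_num : (0:ℝ) ≤ 2))
      (by linarith : (0:ℝ) ≤ 1 - t) ht (by ring)
    simp only [smul_eq_mul] at hc
    have he : (1 - t) * 1 + t * 2 = 1 + t := by ring
    rw [he, Real.one_rpow] at hc
    calc (1 + t) ^ β ≤ (1 - t) * 1 + t * 2 ^ β := hc
      _ ≤ 1 + β * 2 ^ β * t := by
          nlinarith [mul_nonneg ht (by linarith : (0:ℝ) ≤ 2 ^ β - 1),
            mul_nonneg (mul_nonneg ht (by linarith : (0:ℝ) ≤ 2 ^ β)) (by linarith : 0 ≤ β - 1)]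

theorem pairwise_constants_optimal (n : ℕ) (hn : 2 ≤ n) (C α : ℝ) (hC : 0 < C)
    (hα : 0 < α)
    (h : ∀ x : Fin n → ℝ, (∀ i, 0 ≤ x i) →
      (∑ i, x i) / n - (∏ i, x i) ^ ((1 : ℝ) / n) ≥
        C * ∑ i, ∑ j ∈ Finset.Ioi i, |x i ^ (1 / α) - x j ^ (1 / α)| ^ α) :
    C ≤ 1 / (n * (n - 1)) ∧ 2 ≤ α := by
  haveI : NeZero n := ⟨by omega⟩
  have hnR : (2:ℝ) ≤ (n:ℝ) := by exact_mod_cast hn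
  have hn0 : (0:ℝ) < (n:ℝ) := by linarith
  have hcard : ((n - 1 : ℕ) : ℝ) = (n:ℝ) - 1 := by
    have : 1 ≤ n := by omega
    push_cast [this]; ring
  -- a generic computation of the pairwise sum for one exceptional coordinate
  have pairsum : ∀ a b : ℝ,
      (∑ i : Fin n, ∑ j ∈ Finset.Ioi i,
        |(if i = 0 then a else b) ^ (1/α) - (if j = 0 then a else b) ^ (1/α)| ^ α)
      = (n - 1 : ℕ) * |a ^ (1/α) - b ^ (1/α)| ^ α := by
    intro a b
    rw [Finset.sum_eq_single (0 : Fin n)]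
    · have : ∀ j ∈ Finset.Ioi (0 : Fin n),
          |(if (0:Fin n) = 0 then a else b) ^ (1/α) - (if j = 0 then a else b) ^ (1/α)| ^ α
            = |a ^ (1/α) - b ^ (1/α)| ^ α := by
        intro j hj
        have hj0 : j ≠ 0 := by
          intro hj0; rw [hj0] at hj; exact absurd (Finset.mem_Ioi.1 hj) (lt_irrefl _)
        simp [hj0]
      rw [Finset.sum_congr rfl this, Finset.sum_const, Fin.card_Ioi]
      simp
    · intro i _ hi
      apply Finset.sum_eq_zero
      intro j hj
      have hj0 : j ≠ 0 := by
        intro hj0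
        rw [hj0] at hj
        exact absurd ((Finset.mem_Ioi.1 hj).trans_le (Fin.zero_le i)) (lt_irrefl _)
      simp [hi, hj0, Real.zero_rpow hα.ne']
    · intro habs; exact absurd (Finset.mem_univ _) habs
  constructor
  · -- C ≤ 1/(n(n-1)) via x = (1,0,...,0)
    set x : Fin n → ℝ := fun i => if i = 0 then 1 else 0 with hxdef
    have hx := h x (fun i => by by_cases hi : i = 0 <;> simp [hxdef, hi])
    have hsum : ∑ i, x i = 1 := by
      simp [hxdef, Finset.sum_ite_eq' Finset.univ (0 : Fin n) (fun _ => (1:ℝ))]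
    have i1 : Fin n := ⟨1, by omega⟩
    have hprod : ∏ i, x i = 0 := by
      apply Finset.prod_eq_zero (Finset.mem_univ (⟨1, by omega⟩ : Fin n))
      have : (⟨1, by omega⟩ : Fin n) ≠ 0 := by
        intro hh; exact absurd (congrArg Fin.val hh) (by simp)
      simp [hxdef, this]
    have hps : (∑ i : Fin n, ∑ j ∈ Finset.Ioi i,
        |x i ^ (1/α) - x j ^ (1/α)| ^ α) = (n - 1 : ℕ) := by
      rw [hxdef]
      rw [pairsum 1 0]
      rw [Real.one_rpow, Real.zero_rpow (by positivity : 1/α ≠ 0)]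
      simp
    rw [hsum, hprod, hps, Real.zero_rpow (by positivity : (1:ℝ)/n ≠ 0), hcard] at hx
    rw [ge_iff_le, sub_zero] at hx
    have hpos : (0:ℝ) < (n:ℝ) * ((n:ℝ) - 1) := by nlinarith
    rw [le_div_iff₀ hpos]
    calc C * ((n:ℝ) * ((n:ℝ) - 1)) = (C * ((n:ℝ)-1)) * n := by ring
      _ ≤ (1/n) * n := by
          apply mul_le_mul_of_nonneg_right _ hn0.le
          linarith [hx]
      _ = 1 := by field_simp
  · -- α ≥ 2
    by_contra hlt
    push_neg at hlt
    set M : ℝ := α * 2 ^ α with hM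
    set K : ℝ := n * 2 ^ α * M ^ 2 with hK
    have h2pos : (0:ℝ) < (2:ℝ) ^ α := Real.rpow_pos_of_pos (by norm_num) α
    have hMpos : 0 < M := by positivity
    have hKpos : 0 < K := by positivity
    have key : ∀ t : ℝ, 0 < t → t ≤ 1 → C * ((n:ℝ) - 1) * t ^ α ≤ K * t ^ (2:ℕ) := by
      intro t ht ht1
      have h1t : (0:ℝ) < 1 + t := by linarith
      set a : ℝ := (1 + t) ^ α with ha
      have hapos : 0 < a := Real.rpow_pos_of_pos h1t α
      set x : Fin n → ℝ := fun i => if i = 0 then a else 1 with hxdef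
      have hx := h x (fun i => by by_cases hi : i = 0 <;> simp [hxdef, hi, hapos.le])
      set u : ℝ := (1 + t) ^ (α / n) with hu
      have hu1 : 1 ≤ u := Real.one_le_rpow (by linarith) (by positivity)
      have hun : u ^ n = a := by
        rw [hu, ha, ← Real.rpow_natCast ((1+t) ^ (α/n)) n, ← Real.rpow_mul h1t.le]
        congr 1
        field_simp
      have hsum : ∑ i, x i = a + ((n - 1 : ℕ) : ℝ) := by
        rw [← Finset.sum_erase_add Finset.univ x (Finset.mem_univ 0)]
        have : ∀ i ∈ Finset.univ.erase (0 : Fin n), x i = 1 := by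
          intro i hi
          simp [hxdef, (Finset.mem_erase.1 hi).1]
        rw [Finset.sum_congr rfl this, Finset.sum_const, Finset.card_erase_of_mem (Finset.mem_univ _)]
        simp [hxdef, add_comm]
      have hprod : ∏ i, x i = a := by
        rw [← Finset.prod_erase_mul Finset.univ x (Finset.mem_univ 0)]
        have : ∀ i ∈ Finset.univ.erase (0 : Fin n), x i = 1 := by
          intro i hi
          simp [hxdef, (Finset.mem_erase.1 hi).1]
        rw [Finset.prod_congr rfl this, Finset.prod_const_one, one_mul]
        simp [hxdef]
      have hprpow : a ^ ((1:ℝ)/n) = u := by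
        rw [ha, hu, ← Real.rpow_mul h1t.le]
        congr 1
        field_simp
      have hps : (∑ i : Fin n, ∑ j ∈ Finset.Ioi i,
          |x i ^ (1/α) - x j ^ (1/α)| ^ α) = ((n - 1 : ℕ) : ℝ) * t ^ α := by
        rw [hxdef, pairsum a 1]
        have haa : a ^ (1/α) = 1 + t := by
          rw [ha, ← Real.rpow_mul h1t.le]
          rw [mul_one_div_cancel hα.ne', Real.rpow_one]
        rw [haa, Real.one_rpow]
        congr 2
        rw [abs_of_nonneg (by linarith : (0:ℝ) ≤ 1 + t - 1)]
        ring
      rw [hsum, hprod, hprpow, hps] at hx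
      -- bound the AM-GM gap
      have hgap : (a + ((n-1:ℕ):ℝ)) / n - u ≤ K * t ^ (2:ℕ) := by
        have e1 : (a + ((n-1:ℕ):ℝ)) / n - u = (u ^ n - 1 - n * (u - 1)) / n := by
          rw [hun, hcard]
          field_simp
          ring
        rw [e1]
        have h2 := aux_pow n u hu1
        have hub : u ^ n ≤ 2 ^ α := by
          rw [hun, ha]
          exact Real.rpow_le_rpow h1t.le (by linarith) hα.le
        have humt : u - 1 ≤ M * t := by
          have hle : u ≤ a := by
            rw [hu, ha]
            apply Real.rpow_le_rpow_of_exponent_le (by linarith)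
            apply div_le_self hα.le
            exact_mod_cast (by omega : 1 ≤ n)
          have hb := aux_bern α t hα ht.le ht1
          rw [← ha] at hb
          rw [hM]
          linarith
        have hsq : (u - 1) ^ 2 ≤ (M * t) ^ 2 := by
          apply pow_le_pow_left₀ (by linarith) humt 2
        calc (u ^ n - 1 - n * (u - 1)) / n ≤ (n ^ 2 * u ^ n * (u - 1) ^ 2) / n := by
              gcongr
            _ ≤ K * t ^ (2:ℕ) := by
              rw [hK, div_le_iff₀ hn0]
              calc (n:ℝ) ^ 2 * u ^ n * (u - 1) ^ 2 ≤ (n:ℝ) ^ 2 * (2 ^ α) * (M * t) ^ 2 := by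
                    apply mul_le_mul
                    · exact mul_le_mul_of_nonneg_left hub (by positivity)
                    · exact hsq
                    · positivity
                    · positivity
                _ = (n:ℝ) * 2 ^ α * M ^ 2 * t ^ 2 * n := by ring
      rw [hcard] at hx hgap
      have he2 : C * (((n:ℝ) - 1) * t ^ α) = C * ((n:ℝ) - 1) * t ^ α := by ring
      rw [he2] at hx
      linarith
    -- derive contradiction from key
    have hD : (0:ℝ) < C * ((n:ℝ) - 1) := by nlinarith
    set D : ℝ := C * ((n:ℝ) - 1) with hDdef
    set t0 : ℝ := (D / (2 * K)) ^ ((1:ℝ) / (2 - α)) with ht0def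
    have ht0 : 0 < t0 := Real.rpow_pos_of_pos (by positivity) _
    set t : ℝ := min 1 t0 with htdef
    have ht : 0 < t := lt_min one_pos ht0
    have ht1 : t ≤ 1 := min_le_left _ _
    have h1 := key t ht ht1
    have htpow : (0:ℝ) < t ^ α := Real.rpow_pos_of_pos ht α
    have hsplit : t ^ (2:ℕ) = t ^ (2 - α) * t ^ α := by
      rw [← Real.rpow_natCast t 2, ← Real.rpow_add ht]
      norm_num
    have hDle : D ≤ K * t ^ (2 - α) := by
      rw [hsplit] at h1
      have := (mul_le_mul_iff_of_pos_right htpow).1 (by linarith [h1] : D * t ^ α ≤ (K * t ^ (2 - α)) * t ^ α)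
      exact this
    have hmono : t ^ (2 - α) ≤ t0 ^ (2 - α) :=
      Real.rpow_le_rpow ht.le (min_le_right _ _) (by linarith)
    have ht0val : t0 ^ (2 - α) = D / (2 * K) := by
      rw [ht0def, ← Real.rpow_mul (by positivity)]
      rw [one_div, inv_mul_cancel₀ (by linarith : (2:ℝ) - α ≠ 0), Real.rpow_one]
    rw [ht0val] at hmono
    have : D ≤ D / 2 := by
      calc D ≤ K * t ^ (2 - α) := hDle
        _ ≤ K * (D / (2 * K)) := mul_le_mul_of_nonneg_left hmono hKpos.le
        _ = D / 2 := by field_simp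
    linarith
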